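/- Let (X,S) be the S-adic subshift generated by a positive directive sequence τ = (τ_n: 𝒜_{n+1}* → 𝒜_n*)_{n≥0}. Assume that K = liminf_{n→∞} ‖τ_{[0,n]}‖/⟨τ_{[0,n]}⟩ < +∞ (the proportional towers property) and that the sequence (|𝒜_n|)_{n≥0} is bounded. Then liminf_{n→∞} p_X(n)/n < +∞. -/

import Mathlib

open Filter Topology
open scoped ENNReal

section Defs

variable {A B C : Type*}

/-- The shift of a two-sided sequence by `k`. -/
def shiftBy (k : ℤ) (x : ℤ → A) : ℤ → A := fun n => x (n + k)

/-- The finite word `x_m x_{m+1} ⋯ x_{m+len-1}` read in the two-sided sequence `x`. -/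
def factorAt (x : ℤ → A) (m : ℤ) (len : ℕ) : List A :=
  (List.range len).map fun i => x (m + (i : ℤ))

/-- Extension of a morphism (given on letters) to finite words. -/
def wordImage (τ : A → List B) (w : List A) : List B := (w.map τ).flatten

/-- Composition of two morphisms. -/
def morphComp (σ : B → List C) (τ : A → List B) : A → List C :=
  fun a => wordImage σ (τ a)

/-- A morphism is non-erasing if no letter is sent to the empty word. -/
def NonErasing (τ : A → List B) : Prop := ∀ a, τ a ≠ []

/-- A morphism is positive if every target letter occurs in the image of each letter. -/
def PositiveMorph (τ : A → List B) : Prop := ∀ a : A, ∀ b : B, b ∈ τ a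

/-- A morphism is proper if all images start with the same letter and end with the same letter. -/
def ProperMorph (τ : A → List B) : Prop :=
  ∃ b b' : B, ∀ a : A, (τ a).head? = some b ∧ (τ a).getLast? = some b'

/-- Cumulative lengths of the images `τ(y_0 ⋯ y_{n-1})` (or the negative part for `n < 0`). -/
def cumLen (τ : A → List B) (y : ℤ → A) (n : ℤ) : ℤ :=
  if 0 ≤ n then ∑ i ∈ Finset.range n.toNat, ((τ (y (i : ℤ))).length : ℤ)
  else -∑ i ∈ Finset.range (-n).toNat, ((τ (y (-(i : ℤ) - 1))).length : ℤ)

/-- `z` is the two-sided concatenation of the images of the letters of `y` under `τ`,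
the image of the 0-th coordinate starting at coordinate 0. -/
def IsSeqImage (τ : A → List B) (y : ℤ → A) (z : ℤ → B) : Prop :=
  ∀ (n : ℤ) (j : Fin (τ (y n)).length), z (cumLen τ y n + ((j : ℕ) : ℤ)) = (τ (y n)).get j

/-- `(k, y)` is a centered `τ`-representation of `x` in `Y`. -/
def IsCenteredRep (τ : A → List B) (Y : Set (ℤ → A)) (x : ℤ → B) (k : ℕ) (y : ℤ → A) : Prop :=
  y ∈ Y ∧ k < (τ (y 0)).length ∧ ∃ z, IsSeqImage τ y z ∧ x = shiftBy (k : ℤ) z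

/-- `τ` is recognizable in `Y`: every point has at most one centered `τ`-representation in `Y`. -/
def RecognizableIn (τ : A → List B) (Y : Set (ℤ → A)) : Prop :=
  ∀ (x : ℤ → B) (k k' : ℕ) (y y' : ℤ → A),
    IsCenteredRep τ Y x k y → IsCenteredRep τ Y x k' y' → k = k' ∧ y = y'

/-- A two-sided sequence is aperiodic for the shift. -/
def AperiodicPoint (x : ℤ → A) : Prop := ∀ k : ℤ, k ≠ 0 → shiftBy k x ≠ x

/-- `τ` is recognizable in `Y` for aperiodic points. -/
def RecognizableInForAperiodic (τ : A → List B) (Y : Set (ℤ → A)) : Prop :=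
  ∀ (x : ℤ → B) (k k' : ℕ) (y y' : ℤ → A), AperiodicPoint x →
    IsCenteredRep τ Y x k y → IsCenteredRep τ Y x k' y' → k = k' ∧ y = y'

/-- A subshift: a closed shift-invariant subset of `A^ℤ`. -/
def IsSubshift [TopologicalSpace A] (X : Set (ℤ → A)) : Prop :=
  IsClosed X ∧ ∀ k : ℤ, ∀ x ∈ X, shiftBy k x ∈ X

/-- A minimal subshift: nonempty and every orbit is dense in it. -/
def MinimalSubshift [TopologicalSpace A] (X : Set (ℤ → A)) : Prop :=
  IsSubshift X ∧ X.Nonempty ∧ ∀ x ∈ X, X ⊆ closure {z | ∃ k : ℤ, z = shiftBy k x}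

/-- `X` is the smallest subshift containing `τ(Y)`. -/
def IsSmallestSubshiftContaining [TopologicalSpace B] (τ : A → List B)
    (Y : Set (ℤ → A)) (X : Set (ℤ → B)) : Prop :=
  IsSubshift X ∧ (∀ y ∈ Y, ∀ z, IsSeqImage τ y z → z ∈ X) ∧
    ∀ X' : Set (ℤ → B), IsSubshift X' → (∀ y ∈ Y, ∀ z, IsSeqImage τ y z → z ∈ X') → X ⊆ X'

/-- The language of a subshift. -/
def langOf (X : Set (ℤ → A)) : Set (List A) :=
  {w | ∃ x ∈ X, ∃ m : ℤ, factorAt x m w.length = w}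

/-- The complexity function of a subshift. -/
noncomputable def complexity (X : Set (ℤ → A)) (n : ℕ) : ℕ :=
  Set.ncard {w : List A | w.length = n ∧ w ∈ langOf X}

/-- `‖τ‖`, the maximal length of the image of a letter. -/
noncomputable def normSup (τ : A → List B) : ℕ := sSup (Set.range fun a => (τ a).length)

/-- `⟨τ⟩`, the minimal length of the image of a letter. -/
noncomputable def normInf (τ : A → List B) : ℕ := sInf (Set.range fun a => (τ a).length)

/-- The language of `θ(A^ℤ)`: finite words occurring in two-sided images under `θ`. -/
def morphLang (θ : A → List C) : Set (List C) :=
  {w | ∃ (x : ℤ → A) (z : ℤ → C) (m : ℤ), IsSeqImage θ x z ∧ factorAt z m w.length = w}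

/-- `p_{θ(A^ℤ)}(n)`: number of words of length `n` occurring in two-sided images under `θ`. -/
noncomputable def morphComplexity (θ : A → List C) (n : ℕ) : ℕ :=
  Set.ncard {w : List C | w.length = n ∧ w ∈ morphLang θ}

/-- The set `F(b, n, σ, L)` of right extensions of `b` in `L`. -/
def Fset (σ : B → List C) (b : B) (n : ℕ) (L : Set (List B)) : Set (List B) :=
  {w | w ∈ L ∧ (b :: w) ∈ L ∧ w.head? ≠ some b ∧
    (wordImage σ w.dropLast).length < n ∧ n ≤ (wordImage σ w).length}

/-- `τ(A^i)`: images under `τ` of words of length `i`. -/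
def imagesOfLen (τ : A → List B) (i : ℕ) : Set (List B) :=
  {w | ∃ u : List A, u.length = i ∧ wordImage τ u = w}

/-- `Comp_i(σ|τ)(n)`, the `i`-th complexity of `σ` with respect to `τ`. -/
noncomputable def relCompI [Fintype B] (σ : B → List C) (τ : A → List B) (i n : ℕ) : ℕ :=
  ∑ b : B, (Fset σ b n (imagesOfLen τ i)).ncard

/-- `Comp(σ|τ)(n)`, the complexity of `σ` with respect to `τ`. -/
noncomputable def relComp [Fintype B] (σ : B → List C) (τ : A → List B) (n : ℕ) : ℕ :=
  ∑ b : B, (Fset σ b n (morphLang τ)).ncard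

/-- Number of maximal blocks of a single repeated letter in a word. -/
def blockCount [DecidableEq B] : List B → ℕ
  | [] => 0
  | [_] => 1
  | a :: b :: l => (if a = b then 0 else 1) + blockCount (b :: l)

/-- The repetition complexity `r-comp(τ)` of a morphism. -/
noncomputable def rcomp [Fintype A] [DecidableEq B] (τ : A → List B) : ℕ :=
  ∑ a : A, blockCount (τ a)

/-- Two two-sided sequences are left asymptotic. -/
def LeftAsymptotic (x y : ℤ → A) : Prop :=
  ∃ N : ℕ, ∀ k : ℕ, N ≤ k → x (-(k : ℤ)) = y (-(k : ℤ))

/-- The shift orbits of `x` and `y` are asymptotic. -/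
def OrbitsAsymptotic (x y : ℤ → A) : Prop :=
  ∃ k k' : ℤ, LeftAsymptotic (shiftBy k x) (shiftBy k' y)

/-- A finite set `W` of non-empty words is recognizable in the subshift `X`. -/
def WordSetRecognizable [TopologicalSpace B] (W : Set (List B)) (X : Set (ℤ → B)) : Prop :=
  ∃ (A' : Type) (_ : Fintype A') (Y : Set (ℤ → A')) (τ : A' → List B),
    Set.range τ = W ∧ NonErasing τ ∧ (@IsSubshift A' ⊥ Y) ∧
    IsSmallestSubshiftContaining τ Y X ∧ RecognizableIn τ Y

end Defs

section Seq

variable {A : ℕ → Type*}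

/-- `τ_{[0,n]} = τ_0 ∘ τ_1 ∘ ⋯ ∘ τ_n`. -/
def compSeq (τ : ∀ n, A (n+1) → List (A n)) : ∀ n, A (n+1) → List (A 0)
  | 0 => τ 0
  | n+1 => fun a => wordImage (compSeq τ n) (τ (n+1) a)

/-- `τ_{[n, n+k]} = τ_n ∘ ⋯ ∘ τ_{n+k}`. -/
def compFrom (τ : ∀ n, A (n+1) → List (A n)) (n : ℕ) : ∀ k, A (n+k+1) → List (A n)
  | 0 => τ n
  | k+1 => fun a => wordImage (compFrom τ n k) (τ (n+k+1) a)

/-- The S-adic subshift generated by the directive sequence `τ`. -/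
def sadicSubshift (τ : ∀ n, A (n+1) → List (A n)) : Set (ℤ → A 0) :=
  {x | ∀ (m : ℤ) (len : ℕ), ∃ (n : ℕ) (a : A (n+1)), factorAt x m len <:+: compSeq τ n a}

/-- The level-`n` subshift `X_τ^{(n)}` of the directive sequence `τ`. -/
def levelSubshift (τ : ∀ n, A (n+1) → List (A n)) (n : ℕ) : Set (ℤ → A n) :=
  {x | ∀ (m : ℤ) (len : ℕ), ∃ (k : ℕ) (a : A (n+k+1)), factorAt x m len <:+: compFrom τ n k a}

end Seq

section Helpers
variable {A B C : Type*}
lemma wordImage_nil (σ : A → List B) : wordImage σ [] = [] := rfl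
lemma wordImage_cons (σ : A → List B) (a : A) (u : List A) :
    wordImage σ (a :: u) = σ a ++ wordImage σ u := by simp [wordImage]
lemma wordImage_append (σ : A → List B) (u v : List A) :
    wordImage σ (u ++ v) = wordImage σ u ++ wordImage σ v := by simp [wordImage]
lemma wordImage_congr {σ σ' : A → List B} {u : List A} (h : ∀ a ∈ u, σ a = σ' a) :
    wordImage σ u = wordImage σ' u := by
  induction u with
  | nil => rfl
  | cons a u ih =>
    rw [wordImage_cons, wordImage_cons, h a (by simp), ih fun a ha => h a (by simp [ha])]
lemma wordImage_wordImage (σ' : B → List C) (σ : A → List B) (u : List A) :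
    wordImage σ' (wordImage σ u) = wordImage (fun a => wordImage σ' (σ a)) u := by
  induction u with
  | nil => rfl
  | cons a u ih => rw [wordImage_cons, wordImage_append, ih, wordImage_cons]
lemma wordImage_ne_nil {σ : A → List B} (hσ : NonErasing σ) {u : List A} (hu : u ≠ []) :
    wordImage σ u ≠ [] := by
  cases u with
  | nil => exact absurd rfl hu
  | cons a u => rw [wordImage_cons]; simp [hσ a]
lemma mem_wordImage_of_mem {σ : A → List B} {u : List A} {a : A} {b : B}
    (ha : a ∈ u) (hb : b ∈ σ a) : b ∈ wordImage σ u := by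
  simp only [wordImage, List.mem_flatten, List.mem_map]
  exact ⟨σ a, ⟨a, ha, rfl⟩, hb⟩
lemma infix_wordImage_of_mem {σ : A → List B} {u : List A} {a : A} (ha : a ∈ u) :
    σ a <:+: wordImage σ u := by
  obtain ⟨s, t, rfl⟩ := List.append_of_mem ha
  exact ⟨wordImage σ s, wordImage σ t, by
    rw [wordImage_append, wordImage_cons]; simp⟩
lemma length_le_normSup [Fintype A] (σ : A → List B) (a : A) :
    (σ a).length ≤ normSup σ :=
  le_csSup (Set.Finite.bddAbove (Set.finite_range _)) ⟨a, rfl⟩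
lemma normInf_le_length (σ : A → List B) (a : A) : normInf σ ≤ (σ a).length :=
  Nat.sInf_le ⟨a, rfl⟩
lemma one_le_normInf [Nonempty A] {σ : A → List B} (hσ : NonErasing σ) :
    1 ≤ normInf σ := by
  obtain ⟨a, ha⟩ := Nat.sInf_mem (⟨(σ (Classical.arbitrary A)).length, ⟨_, rfl⟩⟩ :
    (Set.range fun a : A => (σ a).length).Nonempty)
  rw [normInf, ← ha]
  exact List.length_pos_iff.mpr (hσ a)

/-- spanning lemma -/
lemma span_lemma (σ : B → List C) (w : List C) (hw : w ≠ [])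
    (hL : ∀ b, w.length ≤ (σ b).length) :
    ∀ u : List B, w <:+: wordImage σ u → ∃ a b, w <:+: σ a ++ σ b := by
  intro u
  induction u with
  | nil =>
    intro h
    rw [wordImage_nil, List.infix_nil] at h
    exact absurd h hw
  | cons a u ih =>
    intro h
    rw [wordImage_cons] at h
    obtain ⟨s, t, hst⟩ := h
    by_cases hs : (σ a).length ≤ s.length
    · apply ih
      have := congrArg (List.drop (σ a).length) hst
      rw [List.append_assoc, List.drop_append_of_le_length hs, List.drop_left] at this
      exact ⟨s.drop (σ a).length, t, by rw [List.append_assoc, this]⟩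
    · push_neg at hs
      cases u with
      | nil =>
        refine ⟨a, a, ?_⟩
        have : w <:+: σ a := by
          rw [wordImage_nil, List.append_nil] at hst
          exact ⟨s, t, hst⟩
        exact this.trans (List.prefix_append _ _).isInfix
      | cons b u' =>
        refine ⟨a, b, ?_⟩
        have hsw : s ++ w <+: σ a ++ σ b := by
          have h1 : s ++ w <+: σ a ++ wordImage σ (b :: u') := by
            rw [← hst, List.append_assoc]
            exact ⟨t, by rw [List.append_assoc]⟩
          have h2 : (s ++ w).length ≤ (σ a ++ σ b).length := by
            have := hL b
            simp only [List.length_append]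
            omega
          have h3 := List.prefix_iff_eq_take.mp h1
          rw [wordImage_cons, ← List.append_assoc,
            List.take_append_of_le_length (by simpa using h2)] at h3
          rw [h3]
          exact List.take_prefix _ _
        exact ((List.suffix_append s w).isInfix).trans hsw.isInfix

end Helpers

section SeqHelpers
variable {A : ℕ → Type*}
variable (τ : ∀ n, A (n+1) → List (A n))

lemma compSeq_nonErasing (hne : ∀ n, NonErasing (τ n)) : ∀ n, NonErasing (compSeq τ n) := by
  intro n
  induction n with
  | zero => exact hne 0
  | succ n ih =>
    intro a
    exact wordImage_ne_nil ih (hne (n+1) a)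

lemma compSeq_decomp (n : ℕ) :
    ∀ k (a : A (n+1+k+1)), compSeq τ (n+1+k) a = wordImage (compSeq τ n) (compFrom τ (n+1) k a) := by
  intro k
  induction k with
  | zero => intro a; rfl
  | succ k ih =>
    intro a
    show wordImage (compSeq τ (n+1+k)) (τ (n+1+k+1) a)
      = wordImage (compSeq τ n) (wordImage (compFrom τ (n+1) k) (τ (n+1+k+1) a))
    rw [wordImage_wordImage]
    exact wordImage_congr fun b _ => ih b

lemma compFrom_pos (hne : ∀ n, NonErasing (τ n)) (hpos : ∀ n, 1 ≤ n → PositiveMorph (τ n))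
    (n : ℕ) : ∀ k (b : A (n+1+k+1)) (a : A (n+1)), a ∈ compFrom τ (n+1) k b := by
  intro k
  induction k with
  | zero => intro b a; exact hpos (n+1) (by omega) b a
  | succ k ih =>
    intro b a
    obtain ⟨c, hc⟩ := List.exists_mem_of_ne_nil _ (hne (n+1+k+1) b)
    exact mem_wordImage_of_mem hc (ih c a)

/-- lifting: any level-n block is an infix of any higher-level block -/
lemma compSeq_lift (hne : ∀ n, NonErasing (τ n)) (hpos : ∀ n, 1 ≤ n → PositiveMorph (τ n))
    {n m : ℕ} (h : n < m) (a : A (n+1)) (b : A (m+1)) :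
    compSeq τ n a <:+: compSeq τ m b := by
  obtain ⟨k, rfl⟩ : ∃ k, m = n+1+k := ⟨m - (n+1), by omega⟩
  rw [compSeq_decomp]
  exact infix_wordImage_of_mem (compFrom_pos τ hne hpos n k b a)

lemma compSeq_decomp' {n m : ℕ} (h : n < m) (b : A (m+1)) :
    ∃ u : List (A (n+1)), compSeq τ m b = wordImage (compSeq τ n) u := by
  obtain ⟨k, rfl⟩ : ∃ k, m = n+1+k := ⟨m - (n+1), by omega⟩
  exact ⟨_, compSeq_decomp τ n k b⟩

lemma nonempty_down (hne : ∀ n, NonErasing (τ n)) (n : ℕ) (h : Nonempty (A (n+1))) :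
    Nonempty (A n) := by
  obtain ⟨a⟩ := h
  obtain ⟨b, _⟩ := List.exists_mem_of_ne_nil _ (hne n a)
  exact ⟨b⟩

lemma nonempty_down' (hne : ∀ n, NonErasing (τ n)) (N : ℕ) :
    ∀ k, Nonempty (A (N + k)) → Nonempty (A N) := by
  intro k
  induction k with
  | zero => exact id
  | succ k ih => intro h; exact ih (nonempty_down τ hne (N+k) h)

end SeqHelpers

lemma count_lemma {B C : Type*} [Fintype B] (σ : B → List C) (L M : ℕ)
    (hM : Fintype.card B ≤ M) (T : Set (List C))
    (hT : ∀ w ∈ T, w.length = L ∧ ∃ a b : B, w <:+: σ a ++ σ b) :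
    T.ncard ≤ M * M * (2 * normSup σ + 1) := by
  classical
  set N := normSup σ with hN
  set F : Finset (List C) := ((Finset.univ : Finset B) ×ˢ (Finset.univ : Finset B) ×ˢ
      Finset.range (2*N+1)).image
    (fun p : B × B × ℕ => ((σ p.1 ++ σ p.2.1).drop p.2.2).take L) with hF
  have hsub : T ⊆ ↑F := by
    intro w hw
    obtain ⟨hlen, a, b, hinf⟩ := hT w hw
    obtain ⟨s, t, hst⟩ := hinf
    simp only [hF, Finset.coe_image, Set.mem_image, Finset.mem_coe, Finset.mem_product,
      Finset.mem_univ, Finset.mem_range, true_and]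
    refine ⟨⟨a, b, s.length⟩, ?_, ?_⟩
    · show s.length < 2*N+1
      have hlen2 := congrArg List.length hst
      simp only [List.length_append] at hlen2
      have hna := length_le_normSup σ a
      have hnb := length_le_normSup σ b
      simp only [← hN] at hna hnb
      omega
    · show ((σ a ++ σ b).drop s.length).take L = w
      rw [← hst, List.append_assoc, List.drop_left, ← hlen, List.take_left]
  calc T.ncard ≤ F.card := by
        rw [← Set.ncard_coe_finset]; exact Set.ncard_le_ncard hsub F.finite_toSet
    _ ≤ ((Finset.univ : Finset B) ×ˢ (Finset.univ : Finset B) ×ˢ Finset.range (2*N+1)).card :=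
        Finset.card_image_le
    _ = Fintype.card B * (Fintype.card B * (2*N+1)) := by
        simp [Finset.card_product]
    _ ≤ M * M * (2 * N + 1) := by
        rw [← Nat.mul_assoc]
        exact Nat.mul_le_mul (Nat.mul_le_mul hM hM) le_rfl

section MainAux

variable {A : ℕ → Type*}

theorem stmt14_main {A : ℕ → Type} [∀ n, Fintype (A n)]
    (τ : ∀ n, A (n+1) → List (A n)) (hne : ∀ n, NonErasing (τ n))
    (hpos : ∀ n, 1 ≤ n → PositiveMorph (τ n))
    (hK : Filter.liminf
        (fun n => (normSup (compSeq τ n) : ℝ≥0∞) / (normInf (compSeq τ n) : ℝ≥0∞))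
        Filter.atTop < ⊤)
    (hbd : ∃ M : ℕ, ∀ n, Fintype.card (A n) ≤ M) :
    Filter.liminf
      (fun n : ℕ => (complexity (sadicSubshift τ) n : ℝ≥0∞) / (n : ℝ≥0∞))
      Filter.atTop < ⊤ := by
  classical
  obtain ⟨M, hM⟩ := hbd
  set c' : ℝ≥0∞ := Filter.liminf
      (fun n => (normSup (compSeq τ n) : ℝ≥0∞) / (normInf (compSeq τ n) : ℝ≥0∞))
      Filter.atTop + 1 with hc'
  have hc'top : c' < ⊤ := ENNReal.add_lt_top.mpr ⟨hK, ENNReal.one_lt_top⟩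
  have hfreq0 : ∀ a : ℕ, ∃ n ≥ a,
      (normSup (compSeq τ n) : ℝ≥0∞) / (normInf (compSeq τ n) : ℝ≥0∞) < c' := by
    rw [← Filter.frequently_atTop]
    exact Filter.frequently_lt_of_liminf_lt (by isBoundedDefault)
      (ENNReal.lt_add_right hK.ne one_ne_zero)
  by_cases hall : ∀ n, Nonempty (A n)
  · by_cases hUB : ∀ D : ℕ, ∃ n,
        (normSup (compSeq τ n) : ℝ≥0∞) / (normInf (compSeq τ n) : ℝ≥0∞) < c' ∧
        D ≤ normInf (compSeq τ n)
    · -- Case A : unbounded towers along the good subsequence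
      have hfin : (M:ℝ≥0∞) * M * (2 * c' + 1) < ⊤ :=
        ENNReal.mul_lt_top
          (ENNReal.mul_lt_top (ENNReal.natCast_lt_top M) (ENNReal.natCast_lt_top M))
          (ENNReal.add_lt_top.mpr
            ⟨ENNReal.mul_lt_top (by norm_num) hc'top, ENNReal.one_lt_top⟩)
      refine lt_of_le_of_lt (Filter.liminf_le_of_frequently_le' ?_) hfin
      rw [Filter.frequently_atTop]
      intro L₀
      obtain ⟨n₀, hgood, hD⟩ := hUB (max L₀ 1)
      refine ⟨normInf (compSeq τ n₀), le_trans (le_max_left L₀ 1) hD, ?_⟩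
      set L := normInf (compSeq τ n₀) with hLdef
      have hL1 : 1 ≤ L := le_trans (le_max_right _ _) hD
      have hspan : ∀ w ∈ {w : List (A 0) | w.length = L ∧ w ∈ langOf (sadicSubshift τ)},
          w.length = L ∧ ∃ a b : A (n₀+1), w <:+: compSeq τ n₀ a ++ compSeq τ n₀ b := by
        rintro w ⟨hlen, x, hx, m, hfac⟩
        refine ⟨hlen, ?_⟩
        obtain ⟨n, a, hinf⟩ := hx m w.length
        rw [hfac] at hinf
        obtain ⟨b⟩ := hall (max n n₀ + 1 + 1)
        have h2 : w <:+: compSeq τ (max n n₀ + 1) b :=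
          hinf.trans (compSeq_lift τ hne hpos (by omega) a b)
        obtain ⟨u, hu⟩ := compSeq_decomp' τ (show n₀ < max n n₀ + 1 by omega) b
        rw [hu] at h2
        exact span_lemma _ w
          (by intro h; rw [h] at hlen; simp at hlen; omega)
          (fun b' => hlen ▸ normInf_le_length _ b') u h2
      have hcount := count_lemma (compSeq τ n₀) L M (hM _) _ hspan
      have hcomp : complexity (sadicSubshift τ) L ≤ M * M * (2 * normSup (compSeq τ n₀) + 1) :=
        hcount
      have hL0' : ((L:ℕ) : ℝ≥0∞) ≠ 0 := Nat.cast_ne_zero.mpr (by omega)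
      have hLt' : ((L:ℕ) : ℝ≥0∞) ≠ ⊤ := ENNReal.natCast_ne_top L
      rw [ENNReal.div_le_iff hL0' hLt']
      have h1 : (normSup (compSeq τ n₀) : ℝ≥0∞) ≤ c' * L := by
        rw [ENNReal.div_lt_iff (Or.inl hL0') (Or.inl hLt')] at hgood
        exact hgood.le
      calc (complexity (sadicSubshift τ) L : ℝ≥0∞)
          ≤ ((M * M * (2 * normSup (compSeq τ n₀) + 1) : ℕ) : ℝ≥0∞) := Nat.cast_le.mpr hcomp
        _ = (M:ℝ≥0∞) * M * (2 * (normSup (compSeq τ n₀) : ℝ≥0∞) + 1) := by push_cast; ring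
        _ ≤ (M:ℝ≥0∞) * M * (2 * (c' * L) + L) := by
            have hL1' : (1:ℝ≥0∞) ≤ (L:ℝ≥0∞) := by exact_mod_cast hL1
            gcongr
        _ = (M:ℝ≥0∞) * M * (2 * c' + 1) * L := by ring
    · -- Case B : bounded towers along the good subsequence
      push_neg at hUB
      obtain ⟨D, hD⟩ := hUB
      have hc'D : c' * D ≠ ⊤ := ENNReal.mul_ne_top hc'top.ne (ENNReal.natCast_ne_top D)
      obtain ⟨E, hE⟩ := ENNReal.exists_nat_gt hc'D
      have hbound : ∀ n,
          (normSup (compSeq τ n) : ℝ≥0∞) / (normInf (compSeq τ n) : ℝ≥0∞) < c' →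
          normSup (compSeq τ n) ≤ E := by
        intro n hgn
        have hinf1 : 1 ≤ normInf (compSeq τ n) :=
          @one_le_normInf _ _ (hall (n+1)) _ (compSeq_nonErasing τ hne n)
        have h1 : (normInf (compSeq τ n) : ℝ≥0∞) ≠ 0 := Nat.cast_ne_zero.mpr (by omega)
        have hlt := hD n hgn
        rw [ENNReal.div_lt_iff (Or.inl h1) (Or.inl (ENNReal.natCast_ne_top _))] at hgn
        have h2 : (normSup (compSeq τ n) : ℝ≥0∞) < (E:ℝ≥0∞) :=
          lt_of_lt_of_le hgn (le_trans (by
            have hlt' : (normInf (compSeq τ n) : ℝ≥0∞) ≤ (D:ℝ≥0∞) := by exact_mod_cast hlt.le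
            gcongr) hE.le)
        exact_mod_cast h2.le
      refine lt_of_le_of_lt (Filter.liminf_le_of_frequently_le' (x := 0) ?_) ENNReal.zero_lt_top
      refine (Filter.eventually_atTop.mpr ⟨E+1, ?_⟩).frequently
      intro L hL
      have hempty : {w : List (A 0) | w.length = L ∧ w ∈ langOf (sadicSubshift τ)} = ∅ := by
        ext w
        simp only [Set.mem_setOf_eq, Set.mem_empty_iff_false, iff_false, not_and]
        intro hlen
        rintro ⟨x, hx, m, hfac⟩
        obtain ⟨n, a, hinf⟩ := hx m w.length
        rw [hfac] at hinf
        obtain ⟨n', hn', hgood'⟩ := hfreq0 (n+1)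
        obtain ⟨b⟩ := hall (n'+1)
        have h2 := (hinf.trans (compSeq_lift τ hne hpos (by omega) a b)).length_le
        have h3 := length_le_normSup (compSeq τ n') b
        have h4 := hbound n' hgood'
        omega
      have hz : complexity (sadicSubshift τ) L = 0 := by
        unfold complexity; rw [hempty, Set.ncard_empty]
      simp [hz]
  · -- Case I : some alphabet is empty
    push_neg at hall
    obtain ⟨N, hN⟩ := hall
    replace hN : IsEmpty (A N) := hN
    refine lt_of_le_of_lt (Filter.liminf_le_of_frequently_le' (x := 0) ?_) ENNReal.zero_lt_top
    refine (Filter.eventually_atTop.mpr ⟨(Finset.range N).sup (fun n => normSup (compSeq τ n)) + 1, ?_⟩).frequently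
    intro L hL
    have hempty : {w : List (A 0) | w.length = L ∧ w ∈ langOf (sadicSubshift τ)} = ∅ := by
      ext w
      simp only [Set.mem_setOf_eq, Set.mem_empty_iff_false, iff_false, not_and]
      intro hlen
      rintro ⟨x, hx, m, hfac⟩
      obtain ⟨n, a, hinf⟩ := hx m w.length
      rw [hfac] at hinf
      have hnN : n + 1 < N := by
        by_contra hcon
        push_neg at hcon
        have hnon : Nonempty (A N) := by
          refine nonempty_down' τ hne N (n+1-N) ?_
          have hNk : N + (n+1-N) = n+1 := by omega
          rw [hNk]; exact ⟨a⟩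
        exact hN.false hnon.some
      have h2 := hinf.length_le
      have h3 := length_le_normSup (compSeq τ n) a
      have h4 : normSup (compSeq τ n) ≤ (Finset.range N).sup (fun k => normSup (compSeq τ k)) :=
        Finset.le_sup (f := fun k => normSup (compSeq τ k))
          (Finset.mem_range.mpr (show n < N by omega))
      omega
    have hz : complexity (sadicSubshift τ) L = 0 := by
      unfold complexity; rw [hempty, Set.ncard_empty]
    simp [hz]

end MainAux


/-- an S-adic subshift with proportional towers and bounded alphabets has
non-superlinear complexity (Corollary `cor:proptowersimplynonsup`). -/
theorem stmt14 {A : ℕ → Type} [∀ n, Fintype (A n)]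
    (τ : ∀ n, A (n+1) → List (A n)) (hne : ∀ n, NonErasing (τ n))
    (hpos : ∀ n, 1 ≤ n → PositiveMorph (τ n))
    (hK : Filter.liminf
        (fun n => (normSup (compSeq τ n) : ℝ≥0∞) / (normInf (compSeq τ n) : ℝ≥0∞))
        Filter.atTop < ⊤)
    (hbd : ∃ M : ℕ, ∀ n, Fintype.card (A n) ≤ M) :
    Filter.liminf
      (fun n : ℕ => (complexity (sadicSubshift τ) n : ℝ≥0∞) / (n : ℝ≥0∞))
      Filter.atTop < ⊤ :=
  stmt14_main τ hne hpos hK hbd
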